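/- Let α ∈ (1,∞) and Q_1, Q_2 joint distributions on finite S × X, W a channel from X to finite Y. Then Arimoto's mutual information of order α satisfies |I_α^A(P_{S_1,Y_1}) − I_α^A(P_{S_2,Y_2})| ≤ (2α/(α−1)) · |S|^{1−1/α} · ‖Q_1 − Q_2‖_1, where P_{S_i,Y_i}(s,y) = Σ_x Q_i(s,x) W(x,y). -/

import Mathlib

open Finset

lemma rpow_split {x α : ℝ} (hx : 0 ≤ x) (hα : 1 < α) : x ^ α = x * x ^ (α - 1) := by
  have h2 := Real.rpow_add' (y := 1) (z := α - 1) hx (by intro h; linarith)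
  rw [Real.rpow_one] at h2
  calc x ^ α = x ^ ((1:ℝ) + (α - 1)) := by congr 1; ring
    _ = x * x ^ (α - 1) := h2

/-- ℓ^α norm is at most ℓ¹ norm for nonnegative vectors, α ≥ 1. -/
lemma lp_le_l1 {ι : Type*} [Fintype ι] {α : ℝ} (hα : 1 < α) (f : ι → ℝ)
    (hf : ∀ i, 0 ≤ f i) : (∑ i, f i ^ α) ^ (1/α) ≤ ∑ i, f i := by
  have hα0 : (0:ℝ) < α := by linarith
  have hsum : 0 ≤ ∑ i, f i := Finset.sum_nonneg fun i _ => hf i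
  have key : ∑ i, f i ^ α ≤ (∑ i, f i) ^ α := by
    calc ∑ i, f i ^ α ≤ ∑ i, f i * (∑ j, f j) ^ (α - 1) := by
          apply Finset.sum_le_sum
          intro i _
          rw [rpow_split (hf i) hα]
          exact mul_le_mul_of_nonneg_left
            (Real.rpow_le_rpow (hf i)
              (Finset.single_le_sum (fun j _ => hf j) (Finset.mem_univ i)) (by linarith)) (hf i)
      _ = (∑ i, f i) * (∑ j, f j) ^ (α-1) := by rw [← Finset.sum_mul]
      _ = (∑ i, f i) ^ α := (rpow_split hsum hα).symm
  calc (∑ i, f i ^ α) ^ (1/α) ≤ ((∑ i, f i) ^ α) ^ (1/α) :=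
        Real.rpow_le_rpow (Finset.sum_nonneg fun i _ => Real.rpow_nonneg (hf i) α) key (by positivity)
    _ = ∑ i, f i := by
        rw [← Real.rpow_mul hsum, mul_one_div, div_self hα0.ne', Real.rpow_one]

/-- Hölder: ℓ¹ norm at most card^{1-1/α} times ℓ^α norm. -/
lemma l1_le_lp {ι : Type*} [Fintype ι] [Nonempty ι] {α : ℝ} (hα : 1 < α) (f : ι → ℝ)
    (hf : ∀ i, 0 ≤ f i) :
    ∑ i, f i ≤ (Fintype.card ι : ℝ) ^ (1 - 1/α) * (∑ i, f i ^ α) ^ (1/α) := by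
  have hα0 : (0:ℝ) < α := by linarith
  set n : ℝ := (Fintype.card ι : ℝ) with hn
  have hn0 : 0 < n := Nat.cast_pos.mpr Fintype.card_pos
  have h := Real.arith_mean_le_rpow_mean Finset.univ (fun _ => n⁻¹) f
    (fun i _ => by positivity) (by simp [Finset.card_univ]; exact mul_inv_cancel₀ hn0.ne') (fun i _ => hf i) hα.le
  -- h : ∑ i, n⁻¹ * f i ≤ (∑ i, n⁻¹ * f i ^ α) ^ (1/α)
  rw [← Finset.mul_sum, ← Finset.mul_sum,
    Real.mul_rpow (by positivity) (Finset.sum_nonneg fun i _ => Real.rpow_nonneg (hf i) α)] at h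
  have h2 : ∑ i, f i ≤ n * (n⁻¹ ^ (1/α) * (∑ i, f i ^ α) ^ (1/α)) := by
    calc ∑ i, f i = n * (n⁻¹ * ∑ i, f i) := by field_simp
      _ ≤ n * (n⁻¹ ^ (1/α) * (∑ i, f i ^ α) ^ (1/α)) := by
          exact mul_le_mul_of_nonneg_left h hn0.le
  refine h2.trans (le_of_eq ?_)
  rw [← mul_assoc]
  congr 1
  rw [← Real.rpow_neg_one n, ← Real.rpow_mul hn0.le,
    show (1:ℝ) - 1/α = 1 + (-1)*(1/α) by ring, Real.rpow_add hn0, Real.rpow_one]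


/-- Minkowski difference bound for nonnegative vectors. -/
lemma abs_lp_sub_lp {ι : Type*} [Fintype ι] {α : ℝ} (hα : 1 < α) (f g : ι → ℝ)
    (hf : ∀ i, 0 ≤ f i) (hg : ∀ i, 0 ≤ g i) :
    |(∑ i, f i ^ α) ^ (1/α) - (∑ i, g i ^ α) ^ (1/α)| ≤ (∑ i, |f i - g i| ^ α) ^ (1/α) := by
  have key : ∀ (f g : ι → ℝ), (∀ i, 0 ≤ f i) → (∀ i, 0 ≤ g i) →
      (∑ i, f i ^ α) ^ (1/α) - (∑ i, g i ^ α) ^ (1/α) ≤ (∑ i, |f i - g i| ^ α) ^ (1/α) := by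
    intro f g hf hg
    have h := Real.Lp_add_le Finset.univ g (fun i => f i - g i) hα.le
    simp only [add_sub_cancel] at h
    have e1 : ∀ i, |f i| = f i := fun i => abs_of_nonneg (hf i)
    have e2 : ∀ i, |g i| = g i := fun i => abs_of_nonneg (hg i)
    simp only [e1, e2] at h
    linarith
  have e : (∑ i, |g i - f i| ^ α) = (∑ i, |f i - g i| ^ α) :=
    Finset.sum_congr rfl fun i _ => by rw [abs_sub_comm]
  rw [abs_sub_le_iff]
  refine ⟨key f g hf hg, ?_⟩
  have h2 := key g f hg hf
  rwa [e] at h2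

/-- Lipschitz bound for log on [c⁻¹, ∞). -/
lemma abs_log_sub_log_le {a b c : ℝ} (hc : 0 < c) (ha : c⁻¹ ≤ a) (hb : c⁻¹ ≤ b) :
    |Real.log a - Real.log b| ≤ c * |a - b| := by
  have key : ∀ u v : ℝ, c⁻¹ ≤ u → c⁻¹ ≤ v → v ≤ u → Real.log u - Real.log v ≤ c * (u - v) := by
    intro u v hu hv huv
    have hv0 : 0 < v := lt_of_lt_of_le (inv_pos.mpr hc) hv
    have hu0 : 0 < u := lt_of_lt_of_le hv0 huv
    have hlog := Real.log_le_sub_one_of_pos (div_pos hu0 hv0)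
    rw [Real.log_div hu0.ne' hv0.ne'] at hlog
    have hvc : v⁻¹ ≤ c := by
      rw [← inv_inv c]
      exact inv_anti₀ (inv_pos.mpr hc) hv
    have h1 : u / v - 1 = (u - v) * v⁻¹ := by field_simp
    have h2 : (u - v) * v⁻¹ ≤ (u - v) * c :=
      mul_le_mul_of_nonneg_left hvc (by linarith)
    nlinarith
  have ha0 : 0 < a := lt_of_lt_of_le (inv_pos.mpr hc) ha
  have hb0 : 0 < b := lt_of_lt_of_le (inv_pos.mpr hc) hb
  rw [abs_sub_le_iff]
  constructor
  · rcases le_total b a with h | h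
    · exact (key a b ha hb h).trans (mul_le_mul_of_nonneg_left (le_abs_self _) hc.le)
    · have hlog : Real.log a - Real.log b ≤ 0 := sub_nonpos.mpr (Real.log_le_log ha0 h)
      have : 0 ≤ c * |a - b| := by positivity
      linarith
  · rcases le_total a b with h | h
    · refine (key b a hb ha h).trans ?_
      rw [abs_sub_comm]
      exact mul_le_mul_of_nonneg_left (le_abs_self _) hc.le
    · have hlog : Real.log b - Real.log a ≤ 0 := sub_nonpos.mpr (Real.log_le_log hb0 h)
      have : 0 ≤ c * |a - b| := by positivity
      linarith


/-- Arimoto's mutual information of order `α` of a joint distribution `R` on `S × Y`. -/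
noncomputable def arimotoMI {S Y : Type*} [Fintype S] [Fintype Y] (α : ℝ)
    (R : S → Y → ℝ) : ℝ :=
  (α / (α - 1)) *
    Real.log ((∑ y, (∑ s, R s y ^ α) ^ (1 / α)) / (∑ s, (∑ y, R s y) ^ α) ^ (1 / α))

/-- Lipschitz continuity of Arimoto's mutual information of order `α ∈ (1, ∞)`
between `S` and the channel output `Y`, in the joint distribution. -/
theorem stmt_8 {S X Y : Type*} [Fintype S] [Fintype X] [Fintype Y] (α : ℝ) (hα : 1 < α)
    (Q₁ Q₂ : S → X → ℝ) (W : X → Y → ℝ)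
    (hQ₁0 : ∀ s x, 0 ≤ Q₁ s x) (hQ₁1 : ∑ s, ∑ x, Q₁ s x = 1)
    (hQ₂0 : ∀ s x, 0 ≤ Q₂ s x) (hQ₂1 : ∑ s, ∑ x, Q₂ s x = 1)
    (hW0 : ∀ x y, 0 ≤ W x y) (hW1 : ∀ x, ∑ y, W x y = 1) :
    |arimotoMI α (fun s y => ∑ x, Q₁ s x * W x y) -
      arimotoMI α (fun s y => ∑ x, Q₂ s x * W x y)| ≤
      (2 * α / (α - 1)) * (Fintype.card S : ℝ) ^ (1 - 1 / α) *
        ∑ s, ∑ x, |Q₁ s x - Q₂ s x| := by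
  classical
  have hS : Nonempty S := by
    by_contra h
    rw [not_nonempty_iff] at h
    rw [Finset.univ_eq_empty, Finset.sum_empty] at hQ₁1
    norm_num at hQ₁1
  have hα0 : (0:ℝ) < α := by linarith
  have hα1 : (0:ℝ) < α - 1 := by linarith
  set k : ℝ := α / (α - 1) with hk
  have hk0 : 0 < k := div_pos hα0 hα1
  set n : ℝ := (Fintype.card S : ℝ) with hn
  have hn0 : (0:ℝ) < n := Nat.cast_pos.mpr Fintype.card_pos
  set c : ℝ := n ^ (1 - 1/α) with hc
  have hc0 : 0 < c := Real.rpow_pos_of_pos hn0 _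
  set R₁ : S → Y → ℝ := fun s y => ∑ x, Q₁ s x * W x y with hR₁def
  set R₂ : S → Y → ℝ := fun s y => ∑ x, Q₂ s x * W x y with hR₂def
  set ε : ℝ := ∑ s, ∑ x, |Q₁ s x - Q₂ s x| with hε
  have hε0 : 0 ≤ ε := Finset.sum_nonneg fun s _ => Finset.sum_nonneg fun x _ => abs_nonneg _
  have hR₁0 : ∀ s y, 0 ≤ R₁ s y := fun s y =>
    Finset.sum_nonneg fun x _ => mul_nonneg (hQ₁0 s x) (hW0 x y)
  have hR₂0 : ∀ s y, 0 ≤ R₂ s y := fun s y =>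
    Finset.sum_nonneg fun x _ => mul_nonneg (hQ₂0 s x) (hW0 x y)
  -- marginals
  have hmarg : ∀ (Q : S → X → ℝ) (s : S), ∑ y, (∑ x, Q s x * W x y) = ∑ x, Q s x := by
    intro Q s
    rw [Finset.sum_comm]
    simp_rw [← Finset.mul_sum, hW1, mul_one]
  have hmass : ∀ (Q : S → X → ℝ), (∑ s, ∑ x, Q s x = 1) →
      ∑ y, ∑ s, (∑ x, Q s x * W x y) = 1 := by
    intro Q hQ
    rw [Finset.sum_comm]
    simp_rw [hmarg Q]
    exact hQ
  set N₁ : ℝ := ∑ y, (∑ s, R₁ s y ^ α) ^ (1/α) with hN₁def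
  set N₂ : ℝ := ∑ y, (∑ s, R₂ s y ^ α) ^ (1/α) with hN₂def
  set D₁ : ℝ := (∑ s, (∑ y, R₁ s y) ^ α) ^ (1/α) with hD₁def
  set D₂ : ℝ := (∑ s, (∑ y, R₂ s y) ^ α) ^ (1/α) with hD₂def
  -- lower bounds
  have hNlow : ∀ (R : S → Y → ℝ), (∀ s y, 0 ≤ R s y) → (∑ y, ∑ s, R s y = 1) →
      c⁻¹ ≤ ∑ y, (∑ s, R s y ^ α) ^ (1/α) := by
    intro R hR0 hR1
    have h : ∀ y : Y, c⁻¹ * ∑ s, R s y ≤ (∑ s, R s y ^ α) ^ (1/α) := by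
      intro y
      have := l1_le_lp hα (fun s => R s y) (fun s => hR0 s y)
      rw [inv_mul_le_iff₀ hc0]
      exact this
    calc c⁻¹ = c⁻¹ * ∑ y, ∑ s, R s y := by rw [hR1, mul_one]
      _ = ∑ y, c⁻¹ * ∑ s, R s y := by rw [Finset.mul_sum]
      _ ≤ ∑ y, (∑ s, R s y ^ α) ^ (1/α) := Finset.sum_le_sum fun y _ => h y
  have hN₁low : c⁻¹ ≤ N₁ := hNlow R₁ hR₁0 (hmass Q₁ hQ₁1)
  have hN₂low : c⁻¹ ≤ N₂ := hNlow R₂ hR₂0 (hmass Q₂ hQ₂1)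
  have hDlow : ∀ (R : S → Y → ℝ), (∀ s y, 0 ≤ R s y) → (∑ s, ∑ y, R s y = 1) →
      c⁻¹ ≤ (∑ s, (∑ y, R s y) ^ α) ^ (1/α) := by
    intro R hR0 hR1
    have := l1_le_lp hα (fun s => ∑ y, R s y)
      (fun s => Finset.sum_nonneg fun y _ => hR0 s y)
    rw [hR1] at this
    rw [← inv_mul_le_iff₀ hc0] at this
    simpa using this
  have hD₁low : c⁻¹ ≤ D₁ := hDlow R₁ hR₁0 (by rw [Finset.sum_comm]; exact hmass Q₁ hQ₁1)
  have hD₂low : c⁻¹ ≤ D₂ := hDlow R₂ hR₂0 (by rw [Finset.sum_comm]; exact hmass Q₂ hQ₂1)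
  -- ℓ1 distance of joints bounded by ε
  have hRdiff : ∑ y, ∑ s, |R₁ s y - R₂ s y| ≤ ε := by
    rw [Finset.sum_comm]
    rw [hε]
    apply Finset.sum_le_sum
    intro s _
    calc ∑ y, |R₁ s y - R₂ s y| = ∑ y, |∑ x, (Q₁ s x - Q₂ s x) * W x y| := by
          apply Finset.sum_congr rfl
          intro y _
          congr 1
          rw [hR₁def, hR₂def]
          rw [← Finset.sum_sub_distrib]
          apply Finset.sum_congr rfl
          intro x _
          ring
      _ ≤ ∑ y, ∑ x, |Q₁ s x - Q₂ s x| * W x y := by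
          apply Finset.sum_le_sum
          intro y _
          refine (Finset.abs_sum_le_sum_abs _ _).trans (le_of_eq ?_)
          apply Finset.sum_congr rfl
          intro x _
          rw [abs_mul, abs_of_nonneg (hW0 x y)]
      _ = ∑ x, |Q₁ s x - Q₂ s x| := by
          rw [Finset.sum_comm]
          simp_rw [← Finset.mul_sum, hW1, mul_one]
  -- numerator difference
  have hdN : |N₁ - N₂| ≤ ε := by
    calc |N₁ - N₂| = |∑ y, ((∑ s, R₁ s y ^ α) ^ (1/α) - (∑ s, R₂ s y ^ α) ^ (1/α))| := by
          rw [hN₁def, hN₂def, Finset.sum_sub_distrib]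
      _ ≤ ∑ y, |(∑ s, R₁ s y ^ α) ^ (1/α) - (∑ s, R₂ s y ^ α) ^ (1/α)| :=
          Finset.abs_sum_le_sum_abs _ _
      _ ≤ ∑ y, ∑ s, |R₁ s y - R₂ s y| := by
          apply Finset.sum_le_sum
          intro y _
          refine (abs_lp_sub_lp hα (fun s => R₁ s y) (fun s => R₂ s y)
            (fun s => hR₁0 s y) (fun s => hR₂0 s y)).trans ?_
          exact lp_le_l1 hα (fun s => |R₁ s y - R₂ s y|) (fun s => abs_nonneg _)
      _ ≤ ε := hRdiff
  -- denominator difference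
  have hdD : |D₁ - D₂| ≤ ε := by
    refine (abs_lp_sub_lp hα (fun s => ∑ y, R₁ s y) (fun s => ∑ y, R₂ s y)
      (fun s => Finset.sum_nonneg fun y _ => hR₁0 s y)
      (fun s => Finset.sum_nonneg fun y _ => hR₂0 s y)).trans ?_
    refine (lp_le_l1 hα (fun s => |(∑ y, R₁ s y) - ∑ y, R₂ s y|)
      (fun s => abs_nonneg _)).trans ?_
    calc ∑ s, |(∑ y, R₁ s y) - ∑ y, R₂ s y| ≤ ∑ s, ∑ y, |R₁ s y - R₂ s y| := by
          apply Finset.sum_le_sum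
          intro s _
          rw [← Finset.sum_sub_distrib]
          exact Finset.abs_sum_le_sum_abs _ _
      _ ≤ ε := by rw [← Finset.sum_comm]; exact hRdiff
  -- positivity
  have hN₁0 : 0 < N₁ := lt_of_lt_of_le (inv_pos.mpr hc0) hN₁low
  have hN₂0 : 0 < N₂ := lt_of_lt_of_le (inv_pos.mpr hc0) hN₂low
  have hD₁0 : 0 < D₁ := lt_of_lt_of_le (inv_pos.mpr hc0) hD₁low
  have hD₂0 : 0 < D₂ := lt_of_lt_of_le (inv_pos.mpr hc0) hD₂low
  have hMI₁ : arimotoMI α R₁ = k * (Real.log N₁ - Real.log D₁) := by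
    rw [arimotoMI, ← hN₁def, ← hD₁def, Real.log_div hN₁0.ne' hD₁0.ne', hk]
  have hMI₂ : arimotoMI α R₂ = k * (Real.log N₂ - Real.log D₂) := by
    rw [arimotoMI, ← hN₂def, ← hD₂def, Real.log_div hN₂0.ne' hD₂0.ne', hk]
  rw [hMI₁, hMI₂]
  have h1 : |Real.log N₁ - Real.log N₂| ≤ c * ε :=
    (abs_log_sub_log_le hc0 hN₁low hN₂low).trans (mul_le_mul_of_nonneg_left hdN hc0.le)
  have h2 : |Real.log D₁ - Real.log D₂| ≤ c * ε :=
    (abs_log_sub_log_le hc0 hD₁low hD₂low).trans (mul_le_mul_of_nonneg_left hdD hc0.le)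
  have hre : k * (Real.log N₁ - Real.log D₁) - k * (Real.log N₂ - Real.log D₂) =
      k * ((Real.log N₁ - Real.log N₂) - (Real.log D₁ - Real.log D₂)) := by ring
  rw [hre, abs_mul, abs_of_pos hk0]
  have h3 : |(Real.log N₁ - Real.log N₂) - (Real.log D₁ - Real.log D₂)| ≤ c * ε + c * ε :=
    (abs_sub _ _).trans (add_le_add h1 h2)
  calc k * |(Real.log N₁ - Real.log N₂) - (Real.log D₁ - Real.log D₂)| ≤ k * (c * ε + c * ε) :=
        mul_le_mul_of_nonneg_left h3 hk0.le
    _ = 2 * α / (α - 1) * c * ε := by rw [hk]; ring
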